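/- For any A ∈ ℝ^d, r > 0, and s > d−1 (with d ≥ 2), the surface integral over the unit sphere satisfies ∫_{S^{d-1}} ⟨A + rω⟩^{-s} dω ≲ ⟨|A| − r⟩^{d−1−s} ⟨r⟩^{1−d}, where ⟨x⟩ = (1 + |x|²)^{1/2} and the implicit constant depends only on d and s. -/

import Mathlib

open MeasureTheory Complex SchwartzMap
open scoped ENNReal NNReal

noncomputable section

/-- ℝ^d as a Euclidean space. -/
abbrev Rd (d : ℕ) := EuclideanSpace ℝ (Fin d)

/-- Fourier transform, convention  f̂(ξ) = (2π)^{-d/2} ∫ e^{-ix·ξ} f(x) dx. -/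
def FT (d : ℕ) (f : Rd d → ℂ) (ξ : Rd d) : ℂ :=
  (((2 * Real.pi) ^ (-(d : ℝ) / 2) : ℝ) : ℂ) *
    ∫ x : Rd d, Complex.exp (-Complex.I * ((inner ℝ x ξ : ℝ) : ℂ)) * f x

/-- Inverse Fourier transform, convention ǧ(x) = (2π)^{-d/2} ∫ e^{ix·ξ} g(ξ) dξ. -/
def IFT (d : ℕ) (g : Rd d → ℂ) (x : Rd d) : ℂ :=
  (((2 * Real.pi) ^ (-(d : ℝ) / 2) : ℝ) : ℂ) *
    ∫ ξ : Rd d, Complex.exp (Complex.I * ((inner ℝ x ξ : ℝ) : ℂ)) * g ξ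

/-- The free Schrödinger propagator e^{isΔ}, defined as the Fourier multiplier e^{-is|ξ|²}. -/
def schrod (d : ℕ) (s : ℝ) (f : Rd d → ℂ) : Rd d → ℂ :=
  IFT d fun ξ => Complex.exp (-Complex.I * (s : ℂ) * ((‖ξ‖ ^ 2 : ℝ) : ℂ)) * FT d f ξ

/-- The (CR) Hamiltonian  H(g) = ((2π)^{d-1}/2) ∫∫ |e^{isΔ} ǧ|⁴ dx ds. -/
def Ham (d : ℕ) (g : Rd d → ℂ) : ℝ :=
  (2 * Real.pi) ^ ((d : ℝ) - 1) / 2 * ∫ s : ℝ, ∫ x : Rd d, ‖schrod d s (IFT d g) x‖ ^ 4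

/-- The (CR) trilinear operator
T(f₁,f₂,f₃) = (2π)^{d-1} 𝓕 ∫ e^{-isΔ}( e^{isΔ}f̌₁ ⬝ conj(e^{isΔ}f̌₂) ⬝ e^{isΔ}f̌₃ ) ds. -/
def Tcr (d : ℕ) (f₁ f₂ f₃ : Rd d → ℂ) (ξ : Rd d) : ℂ :=
  (((2 * Real.pi) ^ ((d : ℝ) - 1) : ℝ) : ℂ) *
    FT d (fun x => ∫ s : ℝ,
      schrod d (-s) (fun y =>
        schrod d s (IFT d f₁) y * (starRingEnd ℂ) (schrod d s (IFT d f₂) y) *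
          schrod d s (IFT d f₃) y) x) ξ

/-- Japanese bracket ⟨t⟩ = (1+t²)^{1/2}. -/
def jb (t : ℝ) : ℝ := Real.sqrt (1 + t ^ 2)

lemma jb_nonneg (t : ℝ) : 0 ≤ jb t := Real.sqrt_nonneg _

lemma one_le_jb (t : ℝ) : 1 ≤ jb t := by
  rw [jb, Real.one_le_sqrt]
  nlinarith [sq_nonneg t]


lemma jb_pos (t : ℝ) : 0 < jb t := lt_of_lt_of_le one_pos (one_le_jb t)

lemma abs_le_jb (t : ℝ) : |t| ≤ jb t := by
  rw [jb, show |t| = Real.sqrt (t^2) by rw [Real.sqrt_sq_eq_abs]]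
  exact Real.sqrt_le_sqrt (by linarith)

lemma jb_mono {x y : ℝ} (h : |x| ≤ |y|) : jb x ≤ jb y := by
  apply Real.sqrt_le_sqrt
  have := _root_.sq_abs x ▸ _root_.sq_abs y ▸ pow_le_pow_left₀ (_root_.abs_nonneg x) h 2
  linarith [pow_le_pow_left₀ (_root_.abs_nonneg x) h 2, _root_.sq_abs x, _root_.sq_abs y]

lemma jb_le_sqrt2_mul {r : ℝ} (hr : 1 ≤ r) : jb r ≤ Real.sqrt 2 * r := by
  rw [jb, show Real.sqrt 2 * r = Real.sqrt (2 * r^2) by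
    rw [Real.sqrt_mul (by norm_num), Real.sqrt_sq (by linarith)]]
  exact Real.sqrt_le_sqrt (by nlinarith)

lemma jb_le_sqrt2 {r : ℝ} (hr : |r| ≤ 1) : jb r ≤ Real.sqrt 2 := by
  rw [jb, show (2:ℝ) = 1 + 1 by norm_num]
  exact Real.sqrt_le_sqrt (by nlinarith [_root_.sq_abs r, pow_le_pow_left₀ (_root_.abs_nonneg r) hr 2])

lemma sqrt_diff_le {h u v : ℝ} (hh : 0 < h) (hu : 0 ≤ u) (hv : 0 ≤ v)
    (hu1 : u ^ 2 ≤ 1 - h ^ 2) (hv1 : v ^ 2 ≤ 1 - h ^ 2) :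
    |Real.sqrt (1 - u ^ 2) - Real.sqrt (1 - v ^ 2)| ≤ (1 / h) * |u - v| := by
  set a := Real.sqrt (1 - u ^ 2) with ha
  set b := Real.sqrt (1 - v ^ 2) with hb
  have ha2 : a ^ 2 = 1 - u ^ 2 := Real.sq_sqrt (by nlinarith)
  have hb2 : b ^ 2 = 1 - v ^ 2 := Real.sq_sqrt (by nlinarith)
  have hah : h ≤ a := by
    rw [ha, show h = Real.sqrt (h^2) by rw [Real.sqrt_sq hh.le]]
    exact Real.sqrt_le_sqrt (by linarith)
  have hbh : h ≤ b := by
    rw [hb, show h = Real.sqrt (h^2) by rw [Real.sqrt_sq hh.le]]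
    exact Real.sqrt_le_sqrt (by linarith)
  have hu2 : u ≤ 1 := by nlinarith
  have hv2 : v ≤ 1 := by nlinarith
  have key : |a - b| * (2 * h) ≤ |u - v| * 2 := by
    calc |a - b| * (2 * h) ≤ |a - b| * (a + b) := by
          apply mul_le_mul_of_nonneg_left (by linarith) (_root_.abs_nonneg _)
      _ = |a ^ 2 - b ^ 2| := by
          rw [show a^2 - b^2 = (a-b)*(a+b) by ring, _root_.abs_mul,
            _root_.abs_of_nonneg (by linarith : (0:ℝ) ≤ a + b)]
      _ = |u - v| * |u + v| := by
          rw [ha2, hb2, show 1 - u^2 - (1 - v^2) = (u-v)*(-(u+v)) by ring, _root_.abs_mul, _root_.abs_neg]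
      _ ≤ |u - v| * 2 := by
          apply mul_le_mul_of_nonneg_left _ (_root_.abs_nonneg _)
          rw [_root_.abs_of_nonneg (by linarith)]; linarith
  rw [div_mul_eq_mul_div, le_div_iff₀ hh]
  nlinarith [_root_.abs_nonneg (a - b)]

lemma proj_norm_sq {d : ℕ} (ω0 : Rd d) (hω0 : ‖ω0‖ = 1) (ω : Rd d) :
    ‖ω - (inner ℝ ω0 ω : ℝ) • ω0‖ ^ 2 = ‖ω‖ ^ 2 - (inner ℝ ω0 ω : ℝ) ^ 2 := by
  set t : ℝ := inner ℝ ω0 ω with ht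
  have hio : (inner ℝ ω ω0 : ℝ) = t := real_inner_comm ω0 ω
  rw [norm_sub_sq_real, norm_smul, real_inner_smul_right, hio]
  simp only [Real.norm_eq_abs, hω0, mul_one]
  rw [_root_.sq_abs]
  ring

open FiniteDimensional in
def Bn (n : ℕ) : ℝ≥0∞ := μH[(n:ℝ)] (Metric.closedBall (0 : EuclideanSpace ℝ (Fin n)) 1)

lemma haar_inst (n : ℕ) :
    Measure.IsAddHaarMeasure (μH[(n:ℝ)] : Measure (EuclideanSpace ℝ (Fin n))) := by
  have hn : ((n:ℝ)) = ((Module.finrank ℝ (EuclideanSpace ℝ (Fin n)) : ℕ) : ℝ) := by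
    rw [finrank_euclideanSpace_fin]
  rw [hn]
  infer_instance

lemma Bn_lt_top (n : ℕ) : Bn n < ⊤ := by
  haveI := haar_inst n
  exact measure_closedBall_lt_top

lemma hmeas_closedBall (n : ℕ) {ρ : ℝ} (hρ : 0 ≤ ρ) :
    μH[(n:ℝ)] (Metric.closedBall (0 : EuclideanSpace ℝ (Fin n)) ρ)
      = ENNReal.ofReal (ρ ^ n) * Bn n := by
  haveI := haar_inst n
  rw [Measure.addHaar_closedBall' _ _ hρ, finrank_euclideanSpace_fin, Bn]

theorem capA {d n : ℕ} (hdn : d = n + 1) (ω0 : Rd d) (hω0 : ‖ω0‖ = 1) {h ρ : ℝ}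
    (hh0 : 0 < h) (hh1 : h ≤ 1) (hρ : 0 ≤ ρ) :
    μH[(n:ℝ)] {ω : Rd d | ‖ω‖ = 1 ∧ h ≤ (inner ℝ ω0 ω : ℝ) ∧
        ‖ω - (inner ℝ ω0 ω : ℝ) • ω0‖ ≤ ρ}
      ≤ ENNReal.ofReal ((1 + 1/h) ^ n * ρ ^ n) * Bn n := by
  have hω0ne : ω0 ≠ 0 := by
    intro h0; rw [h0] at hω0; simp at hω0
  haveI : Fact (Module.finrank ℝ (Rd d) = n + 1) := ⟨by rw [finrank_euclideanSpace_fin, hdn]⟩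
  have hfr : Module.finrank ℝ ((ℝ ∙ ω0)ᗮ : Submodule ℝ (Rd d)) = n :=
    Submodule.finrank_orthogonal_span_singleton hω0ne
  set H := ((ℝ ∙ ω0)ᗮ : Submodule ℝ (Rd d)) with hH
  let eq1 : EuclideanSpace ℝ (Fin n) ≃ₗᵢ[ℝ] H :=
    (LinearIsometryEquiv.piLpCongrLeft 2 ℝ ℝ (finCongr hfr)).symm.trans
      (stdOrthonormalBasis ℝ H).repr.symm
  let j : EuclideanSpace ℝ (Fin n) →ₗᵢ[ℝ] Rd d := H.subtypeₗᵢ.comp eq1.toLinearIsometry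
  have hh2 : (0:ℝ) ≤ 1 - h^2 := by nlinarith
  set ρ' := min ρ (Real.sqrt (1 - h^2)) with hρ'
  have hρ'0 : 0 ≤ ρ' := le_min hρ (Real.sqrt_nonneg _)
  set D : Set (Rd d) := j '' (Metric.closedBall 0 ρ') with hD
  set f : Rd d → Rd d := fun x => x + Real.sqrt (1 - ‖x‖^2) • ω0 with hf
  -- norms of elements of D
  have hDnorm : ∀ x ∈ D, ‖x‖ ≤ ρ' := by
    rintro x ⟨w, hw, rfl⟩
    rw [j.norm_map]
    simpa [Metric.mem_closedBall, dist_zero_right] using hw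
  have hDnorm2 : ∀ x ∈ D, ‖x‖^2 ≤ 1 - h^2 := by
    intro x hx
    have h1 : ‖x‖ ≤ Real.sqrt (1 - h^2) := le_trans (hDnorm x hx) (min_le_right _ _)
    nlinarith [norm_nonneg x, Real.sq_sqrt hh2, Real.sqrt_nonneg (1-h^2)]
  -- the set is contained in f '' D
  have hsub : {ω : Rd d | ‖ω‖ = 1 ∧ h ≤ (inner ℝ ω0 ω : ℝ) ∧
      ‖ω - (inner ℝ ω0 ω : ℝ) • ω0‖ ≤ ρ} ⊆ f '' D := by
    rintro ω ⟨hω1, hωh, hωρ⟩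
    set t : ℝ := inner ℝ ω0 ω with ht
    set y := ω - t • ω0 with hy
    have hyH : y ∈ H := by
      rw [hH]
      refine Submodule.mem_orthogonal_singleton_iff_inner_right.mpr ?_
      rw [hy, inner_sub_right, real_inner_smul_right, real_inner_self_eq_norm_sq, hω0]
      ring
    have hy2 : ‖y‖^2 = 1 - t^2 := by
      have := proj_norm_sq ω0 hω0 ω
      rw [hω1] at this
      simpa using this
    have hyρ' : ‖y‖ ≤ ρ' := by
      refine le_min hωρ ?_
      rw [show ‖y‖ = Real.sqrt (‖y‖^2) from (Real.sqrt_sq (norm_nonneg y)).symm, hy2]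
      exact Real.sqrt_le_sqrt (by nlinarith)
    have hyD : y ∈ D := by
      refine ⟨eq1.symm ⟨y, hyH⟩, ?_, ?_⟩
      · rw [Metric.mem_closedBall, dist_zero_right, eq1.symm.norm_map]
        exact hyρ'
      · show H.subtypeₗᵢ (eq1 (eq1.symm ⟨y, hyH⟩)) = y
        rw [eq1.apply_symm_apply]
        rfl
    refine ⟨y, hyD, ?_⟩
    show y + Real.sqrt (1 - ‖y‖^2) • ω0 = ω
    rw [hy2, show (1 : ℝ) - (1 - t^2) = t^2 by ring, Real.sqrt_sq (le_trans hh0.le hωh)]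
    rw [hy]; abel
  -- Lipschitz bound for f on D
  have hlip : LipschitzOnWith ((1 + 1/h).toNNReal) f D := by
    rw [lipschitzOnWith_iff_dist_le_mul]
    intro x hx z hz
    rw [Real.coe_toNNReal _ (by positivity), dist_eq_norm, dist_eq_norm]
    have hfd : f x - f z = (x - z) + (Real.sqrt (1 - ‖x‖^2) - Real.sqrt (1 - ‖z‖^2)) • ω0 := by
      rw [hf]; simp only [sub_smul]; abel
    have hΔ : |Real.sqrt (1 - ‖x‖^2) - Real.sqrt (1 - ‖z‖^2)| ≤ (1/h) * |‖x‖ - ‖z‖| :=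
      sqrt_diff_le hh0 (norm_nonneg x) (norm_nonneg z) (hDnorm2 x hx) (hDnorm2 z hz)
    calc ‖f x - f z‖ ≤ ‖x - z‖ + ‖(Real.sqrt (1 - ‖x‖^2) - Real.sqrt (1 - ‖z‖^2)) • ω0‖ := by
          rw [hfd]; exact norm_add_le _ _
      _ ≤ ‖x - z‖ + (1/h) * ‖x - z‖ := by
          rw [norm_smul, hω0, mul_one, Real.norm_eq_abs]
          have := le_trans hΔ (mul_le_mul_of_nonneg_left (abs_norm_sub_norm_le x z)
            (by positivity : (0:ℝ) ≤ 1/h))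
          linarith
      _ = (1 + 1/h) * ‖x - z‖ := by ring
  -- measure estimate
  calc μH[(n:ℝ)] {ω : Rd d | ‖ω‖ = 1 ∧ h ≤ (inner ℝ ω0 ω : ℝ) ∧
        ‖ω - (inner ℝ ω0 ω : ℝ) • ω0‖ ≤ ρ}
      ≤ μH[(n:ℝ)] (f '' D) := measure_mono hsub
    _ ≤ (((1 + 1/h).toNNReal : ℝ≥0∞) ^ ((n:ℕ):ℝ)) * μH[(n:ℝ)] D :=
        hlip.hausdorffMeasure_image_le (by positivity)
    _ = (((1 + 1/h).toNNReal : ℝ≥0∞) ^ ((n:ℕ):ℝ)) *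
        μH[(n:ℝ)] (Metric.closedBall (0 : EuclideanSpace ℝ (Fin n)) ρ') := by
        rw [hD, j.isometry.hausdorffMeasure_image (Or.inl (by positivity))]
    _ = ENNReal.ofReal ((1 + 1/h) ^ n) * (ENNReal.ofReal (ρ' ^ n) * Bn n) := by
        rw [hmeas_closedBall n hρ'0, ENNReal.rpow_natCast,
          show ((1 + 1/h).toNNReal : ℝ≥0∞) = ENNReal.ofReal (1 + 1/h) from rfl,
          ← ENNReal.ofReal_pow (by positivity)]
    _ ≤ ENNReal.ofReal ((1 + 1/h) ^ n * ρ ^ n) * Bn n := by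
        rw [ENNReal.ofReal_mul (by positivity), ← mul_assoc]
        refine mul_le_mul_left (mul_le_mul_right ?_ _) _
        exact ENNReal.ofReal_le_ofReal (pow_le_pow_left₀ hρ'0 (min_le_left _ _) n)

lemma sphere_total {d n : ℕ} (hdn : d = n + 1) :
    μH[(n:ℝ)] (Metric.sphere (0:Rd d) 1)
      ≤ (2*d : ℕ) * (ENNReal.ofReal ((1 + Real.sqrt d) ^ n) * Bn n) := by
  have hd1 : 1 ≤ d := by omega
  have hdpos : (0:ℝ) < d := by exact_mod_cast hd1
  have hsd : 0 < Real.sqrt d := Real.sqrt_pos.mpr hdpos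
  have hsd1 : 1 ≤ Real.sqrt d := by
    rw [show (1:ℝ) = Real.sqrt 1 from Real.sqrt_one.symm]
    exact Real.sqrt_le_sqrt (by exact_mod_cast hd1)
  set h0 : ℝ := (Real.sqrt d)⁻¹ with hh0def
  have hh0 : 0 < h0 := by positivity
  have hh1 : h0 ≤ 1 := by
    rw [hh0def]
    exact inv_le_one_of_one_le₀ hsd1
  set u : Fin d × Bool → Rd d :=
    fun p => (if p.2 then (1:ℝ) else -1) • EuclideanSpace.single p.1 1 with hu
  have hun : ∀ p, ‖u p‖ = 1 := by
    intro p
    obtain ⟨i, b⟩ := p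
    rw [hu]
    cases b <;> simp [EuclideanSpace.norm_single]
  have hcov : Metric.sphere (0:Rd d) 1 ⊆
      ⋃ p : Fin d × Bool, {ω : Rd d | ‖ω‖ = 1 ∧ h0 ≤ (inner ℝ (u p) ω : ℝ) ∧
        ‖ω - (inner ℝ (u p) ω : ℝ) • (u p)‖ ≤ 1} := by
    intro ω hω
    rw [mem_sphere_zero_iff_norm] at hω
    -- find a big coordinate
    have hsum : ∑ i, (ω i)^2 = 1 := by
      have h2 : Real.sqrt (∑ i, ‖ω i‖^2) = 1 := by
        rw [← EuclideanSpace.norm_eq, hω]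
      simp only [Real.norm_eq_abs, _root_.sq_abs] at h2
      nlinarith [Real.sq_sqrt (Finset.sum_nonneg fun i (_ : i ∈ Finset.univ) => sq_nonneg (ω i))]
    have hex : ∃ i, 1/(d:ℝ) ≤ (ω i)^2 := by
      by_contra hc
      push_neg at hc
      haveI : Nonempty (Fin d) := ⟨⟨0, by omega⟩⟩
      have := Finset.sum_lt_sum_of_nonempty Finset.univ_nonempty
        (fun i _ => hc i)
      rw [hsum, Finset.sum_const, Finset.card_univ, Fintype.card_fin,
        nsmul_eq_mul] at this
      rw [mul_one_div, div_self (ne_of_gt hdpos)] at this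
      exact lt_irrefl _ this
    obtain ⟨i, hi⟩ := hex
    have habs : h0 ≤ |ω i| := by
      rw [hh0def, ← Real.sqrt_inv, show |ω i| = Real.sqrt ((ω i)^2) from
        (Real.sqrt_sq_eq_abs _).symm]
      exact Real.sqrt_le_sqrt (by rw [← one_div]; exact hi)
    have key : ∀ p : Fin d × Bool, (inner ℝ (u p) ω : ℝ) = |ω i| →
        ω ∈ ⋃ p : Fin d × Bool, {ω : Rd d | ‖ω‖ = 1 ∧ h0 ≤ (inner ℝ (u p) ω : ℝ) ∧
          ‖ω - (inner ℝ (u p) ω : ℝ) • (u p)‖ ≤ 1} := by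
      intro p hinner
      refine Set.mem_iUnion.mpr ⟨p, hω, ?_, ?_⟩
      · rw [hinner]; exact habs
      · have hsq := proj_norm_sq (u p) (hun p) ω
        rw [hω] at hsq
        rw [show ‖ω - (inner ℝ (u p) ω : ℝ) • (u p)‖
            = Real.sqrt (‖ω - (inner ℝ (u p) ω : ℝ) • (u p)‖^2) from
            (Real.sqrt_sq (norm_nonneg _)).symm, hsq]
        refine le_trans (Real.sqrt_le_sqrt ?_) (le_of_eq Real.sqrt_one)
        nlinarith [sq_nonneg ((inner ℝ (u p) ω : ℝ))]
    by_cases hpos : 0 ≤ ω i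
    · refine key (i, true) ?_
      rw [hu]
      simp [real_inner_smul_left, EuclideanSpace.inner_single_left, _root_.abs_of_nonneg hpos]
    · refine key (i, false) ?_
      rw [hu]
      simp [real_inner_smul_left, EuclideanSpace.inner_single_left,
        _root_.abs_of_neg (lt_of_not_ge hpos)]
  calc μH[(n:ℝ)] (Metric.sphere (0:Rd d) 1)
      ≤ μH[(n:ℝ)] (⋃ p : Fin d × Bool, {ω : Rd d | ‖ω‖ = 1 ∧ h0 ≤ (inner ℝ (u p) ω : ℝ) ∧
          ‖ω - (inner ℝ (u p) ω : ℝ) • (u p)‖ ≤ 1}) := measure_mono hcov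
    _ ≤ ∑' p : Fin d × Bool, μH[(n:ℝ)] {ω : Rd d | ‖ω‖ = 1 ∧ h0 ≤ (inner ℝ (u p) ω : ℝ) ∧
          ‖ω - (inner ℝ (u p) ω : ℝ) • (u p)‖ ≤ 1} := measure_iUnion_le _
    _ ≤ ∑' _ : Fin d × Bool, ENNReal.ofReal ((1 + Real.sqrt d) ^ n) * Bn n := by
        refine ENNReal.tsum_le_tsum fun p => ?_
        have := capA hdn (u p) (hun p) hh0 hh1 (zero_le_one) (ρ := 1)
        rw [one_pow, mul_one] at this
        rw [hh0def] at this
        rw [one_div, inv_inv] at this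
        exact this
    _ = (2*d : ℕ) * (ENNReal.ofReal ((1 + Real.sqrt d) ^ n) * Bn n) := by
        rw [tsum_fintype, Finset.sum_const, Finset.card_univ, Fintype.card_prod,
          Fintype.card_fin, Fintype.card_bool, nsmul_eq_mul]
        norm_num [mul_comm]

def Ttot (d n : ℕ) : ℝ≥0∞ := (2*d : ℕ) * (ENNReal.ofReal ((1 + Real.sqrt d) ^ n) * Bn n)

def Ccap (d n : ℕ) : ℝ≥0∞ := ENNReal.ofReal (6^n) * Bn n + ENNReal.ofReal (4^n) * Ttot d n

lemma Ccap_lt_top (d n : ℕ) : Ccap d n < ⊤ := by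
  have hB := Bn_lt_top n
  rw [Ccap, Ttot]
  refine ENNReal.add_lt_top.mpr ⟨?_, ?_⟩
  · exact ENNReal.mul_lt_top ENNReal.ofReal_lt_top hB
  · exact ENNReal.mul_lt_top ENNReal.ofReal_lt_top
      (ENNReal.mul_lt_top (ENNReal.natCast_lt_top _)
        (ENNReal.mul_lt_top ENNReal.ofReal_lt_top hB))

lemma cap_bound {d n : ℕ} (hdn : d = n + 1) (x0 : Rd d) {δ : ℝ} (hδ : 0 < δ) :
    μH[(n:ℝ)] (Metric.sphere (0:Rd d) 1 ∩ Metric.closedBall x0 δ)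
      ≤ Ccap d n * ENNReal.ofReal (δ ^ n) := by
  by_cases hbig : 1/4 ≤ δ
  · have h1 : (1:ℝ≥0∞) ≤ ENNReal.ofReal (4^n) * ENNReal.ofReal (δ^n) := by
      rw [← ENNReal.ofReal_mul (by positivity), ← mul_pow]
      exact ENNReal.one_le_ofReal.mpr (one_le_pow₀ (by linarith))
    calc μH[(n:ℝ)] (Metric.sphere (0:Rd d) 1 ∩ Metric.closedBall x0 δ)
        ≤ μH[(n:ℝ)] (Metric.sphere (0:Rd d) 1) := measure_mono Set.inter_subset_left
      _ ≤ Ttot d n := sphere_total hdn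
      _ = 1 * Ttot d n := (one_mul _).symm
      _ ≤ (ENNReal.ofReal (4^n) * ENNReal.ofReal (δ^n)) * Ttot d n :=
          mul_le_mul_left h1 _
      _ = (ENNReal.ofReal (4^n) * Ttot d n) * ENNReal.ofReal (δ^n) := by ring
      _ ≤ Ccap d n * ENNReal.ofReal (δ^n) := mul_le_mul_left le_add_self _
  · push_neg at hbig
    by_cases hne : (Metric.sphere (0:Rd d) 1 ∩ Metric.closedBall x0 δ).Nonempty
    · obtain ⟨ω1, hω1S, hω1B⟩ := hne
      rw [mem_sphere_zero_iff_norm] at hω1S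
      have hsub : Metric.sphere (0:Rd d) 1 ∩ Metric.closedBall x0 δ ⊆
          {ω : Rd d | ‖ω‖ = 1 ∧ (1/2 : ℝ) ≤ (inner ℝ ω1 ω : ℝ) ∧
            ‖ω - (inner ℝ ω1 ω : ℝ) • ω1‖ ≤ 2*δ} := by
        rintro ω ⟨hωS, hωB⟩
        rw [mem_sphere_zero_iff_norm] at hωS
        have hdist : ‖ω - ω1‖ ≤ 2*δ := by
          rw [← dist_eq_norm]
          calc dist ω ω1 ≤ dist ω x0 + dist x0 ω1 := dist_triangle _ _ _
            _ ≤ δ + δ := add_le_add (Metric.mem_closedBall.mp hωB)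
                (by rw [dist_comm]; exact Metric.mem_closedBall.mp hω1B)
            _ = 2*δ := by ring
        have hnsq : ‖ω - ω1‖^2 = 2 - 2*(inner ℝ ω1 ω : ℝ) := by
          rw [norm_sub_sq_real, hωS, hω1S, real_inner_comm ω ω1]
          ring
        have ht : (1/2 : ℝ) ≤ (inner ℝ ω1 ω : ℝ) := by
          nlinarith [norm_nonneg (ω - ω1)]
        refine ⟨hωS, ht, ?_⟩
        have hsq := proj_norm_sq ω1 hω1S ω
        rw [hωS] at hsq
        rw [show ‖ω - (inner ℝ ω1 ω : ℝ) • ω1‖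
            = Real.sqrt (‖ω - (inner ℝ ω1 ω : ℝ) • ω1‖^2) from
            (Real.sqrt_sq (norm_nonneg _)).symm, hsq]
        have h2 : (1:ℝ)^2 - (inner ℝ ω1 ω : ℝ)^2 ≤ (2*δ)^2 := by
          nlinarith [norm_nonneg (ω - ω1)]
        refine le_trans (Real.sqrt_le_sqrt h2) (le_of_eq ?_)
        exact Real.sqrt_sq (by linarith)
      calc μH[(n:ℝ)] (Metric.sphere (0:Rd d) 1 ∩ Metric.closedBall x0 δ)
          ≤ μH[(n:ℝ)] {ω : Rd d | ‖ω‖ = 1 ∧ (1/2 : ℝ) ≤ (inner ℝ ω1 ω : ℝ) ∧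
              ‖ω - (inner ℝ ω1 ω : ℝ) • ω1‖ ≤ 2*δ} := measure_mono hsub
        _ ≤ ENNReal.ofReal ((1 + 1/(1/2:ℝ))^n * (2*δ)^n) * Bn n :=
            capA hdn ω1 hω1S (by norm_num) (by norm_num) (by linarith)
        _ = ENNReal.ofReal (6^n) * Bn n * ENNReal.ofReal (δ^n) := by
            rw [show ((1:ℝ) + 1/(1/2:ℝ))^n * (2*δ)^n = 6^n * δ^n by
              rw [mul_pow (2:ℝ) δ, ← mul_assoc, ← mul_pow]; norm_num,
              ENNReal.ofReal_mul (by positivity)]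
            ring
        _ ≤ Ccap d n * ENNReal.ofReal (δ^n) := mul_le_mul_left le_self_add _
    · rw [Set.not_nonempty_iff_eq_empty.mp hne]
      simp

def Z1 (d n : ℕ) (s : ℝ) : ℝ≥0∞ := Ttot d n * (1 - ENNReal.ofReal ((2:ℝ)^(-s)))⁻¹

def Z2 (d n : ℕ) (s : ℝ) : ℝ≥0∞ :=
  Ccap d n * ENNReal.ofReal ((2:ℝ)^(n:ℕ)) * (1 - ENNReal.ofReal ((2:ℝ)^((n:ℝ)-s)))⁻¹

lemma Ttot_lt_top (d n : ℕ) : Ttot d n < ⊤ := by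
  rw [Ttot]
  exact ENNReal.mul_lt_top (ENNReal.natCast_lt_top _)
    (ENNReal.mul_lt_top ENNReal.ofReal_lt_top (Bn_lt_top n))

lemma geom_inv_lt_top {x : ℝ} (hx : x < 0) : (1 - ENNReal.ofReal ((2:ℝ)^x))⁻¹ < ⊤ := by
  refine ENNReal.inv_lt_top.mpr ?_
  have h1 : ENNReal.ofReal ((2:ℝ)^x) < 1 :=
    ENNReal.ofReal_lt_one.mpr (Real.rpow_lt_one_of_one_lt_of_neg one_lt_two hx)
  simp only [tsub_pos_iff_lt]
  exact h1

lemma Z1_lt_top (d n : ℕ) {s : ℝ} (hs0 : 0 < s) : Z1 d n s < ⊤ :=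
  ENNReal.mul_lt_top (Ttot_lt_top d n) (geom_inv_lt_top (by linarith))

lemma Z2_lt_top (d n : ℕ) {s : ℝ} (hns : (n:ℝ) < s) : Z2 d n s < ⊤ :=
  ENNReal.mul_lt_top (ENNReal.mul_lt_top (Ccap_lt_top d n) ENNReal.ofReal_lt_top)
    (geom_inv_lt_top (by linarith))

def Cval (d n : ℕ) (s : ℝ) : ℝ := (Z1 d n s + Z2 d n s).toReal * 2^(2*d) + 1

lemma Cval_pos (d n : ℕ) (s : ℝ) : 0 < Cval d n s := by
  have h1 : (0:ℝ) ≤ (Z1 d n s + Z2 d n s).toReal := ENNReal.toReal_nonneg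
  have h2 : (0:ℝ) < 2^(2*d) := by positivity
  rw [Cval]; nlinarith

lemma main_bound {d n : ℕ} (hdn : d = n + 1) {s : ℝ} (hns : (n:ℝ) < s) (hs0 : 0 < s)
    (A : Rd d) {r : ℝ} (hr : 0 < r) :
    (∫⁻ ω in Metric.sphere (0:Rd d) 1,
        ENNReal.ofReal (jb ‖A + r • ω‖ ^ (-s)) ∂μH[(n:ℝ)])
      ≤ ENNReal.ofReal (Cval d n s * jb (‖A‖ - r) ^ ((n:ℝ) - s) * jb r ^ (-(n:ℝ))) := by
  set M := jb (‖A‖ - r) with hMdef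
  have hM1 : (1:ℝ) ≤ M := one_le_jb _
  have hM0 : (0:ℝ) < M := lt_of_lt_of_le one_pos hM1
  set g : Rd d → ℝ := fun ω => jb ‖A + r • ω‖ with hgdef
  have hgc : Continuous g := by
    have h1 : Continuous fun ω : Rd d => 1 + ‖A + r • ω‖^2 :=
      continuous_const.add (((continuous_const.add (continuous_id.const_smul r)).norm).pow 2)
    exact Real.continuous_sqrt.comp h1
  -- lower bound on sphere
  have hgM : ∀ ω : Rd d, ‖ω‖ = 1 → M ≤ g ω := by
    intro ω hω
    have h1 : |‖A‖ - r| ≤ ‖A + r • ω‖ := by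
      have h2 := abs_norm_sub_norm_le A (-(r • ω))
      rw [sub_neg_eq_add, norm_neg, norm_smul, Real.norm_eq_abs, _root_.abs_of_pos hr, hω,
        mul_one] at h2
      exact h2
    refine jb_mono ?_
    rwa [_root_.abs_of_nonneg (norm_nonneg _)]
  -- upper bound for the norm
  have hgup : ∀ ω : Rd d, ‖A + r • ω‖ ≤ g ω := by
    intro ω
    have := abs_le_jb ‖A + r • ω‖
    rwa [_root_.abs_of_nonneg (norm_nonneg _)] at this
  -- the dyadic shells
  set F : ℕ → Set (Rd d) := fun k =>
    {ω | 2^k * M ≤ g ω ∧ g ω < 2^(k+1) * M} ∩ Metric.sphere (0:Rd d) 1 with hFdef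
  have hFmeas : ∀ k, MeasurableSet (F k) := by
    intro k
    exact ((measurableSet_le measurable_const hgc.measurable).inter
      (measurableSet_lt hgc.measurable measurable_const)).inter
      Metric.isClosed_sphere.measurableSet
  have hcover : Metric.sphere (0:Rd d) 1 ⊆ ⋃ k, F k := by
    intro ω hω
    rw [mem_sphere_zero_iff_norm] at hω
    have ht1 : (1:ℝ) ≤ g ω / M := (one_le_div hM0).mpr (hgM ω hω)
    obtain ⟨k, hk1, hk2⟩ := exists_nat_pow_near ht1 (one_lt_two (α := ℝ))
    refine Set.mem_iUnion.mpr ⟨k, ⟨?_, ?_⟩, by rwa [mem_sphere_zero_iff_norm]⟩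
    · calc 2^k * M ≤ (g ω / M) * M := by
            exact mul_le_mul_of_nonneg_right hk1 hM0.le
        _ = g ω := by field_simp
    · calc g ω = (g ω / M) * M := by field_simp
        _ < 2^(k+1) * M := mul_lt_mul_of_pos_right hk2 hM0
  -- pointwise bound on each shell
  have hshell : ∀ k : ℕ, (∫⁻ ω in F k, ENNReal.ofReal (g ω ^ (-s)) ∂μH[(n:ℝ)])
      ≤ ENNReal.ofReal (((2:ℝ)^k * M)^(-s)) * μH[(n:ℝ)] (F k) := by
    intro k
    calc (∫⁻ ω in F k, ENNReal.ofReal (g ω ^ (-s)) ∂μH[(n:ℝ)])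
        ≤ ∫⁻ _ in F k, ENNReal.ofReal (((2:ℝ)^k * M)^(-s)) ∂μH[(n:ℝ)] := by
          refine setLIntegral_mono' (hFmeas k) ?_
          intro ω hω
          refine ENNReal.ofReal_le_ofReal ?_
          exact Real.rpow_le_rpow_of_nonpos (by positivity) hω.1.1 (by linarith)
      _ = ENNReal.ofReal (((2:ℝ)^k * M)^(-s)) * μH[(n:ℝ)] (F k) :=
          setLIntegral_const _ _
  -- measure bounds for shells
  have hμtot : ∀ k : ℕ, μH[(n:ℝ)] (F k) ≤ Ttot d n := fun k =>
    le_trans (measure_mono Set.inter_subset_right) (sphere_total hdn)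
  have hμcap : ∀ k : ℕ, μH[(n:ℝ)] (F k)
      ≤ Ccap d n * ENNReal.ofReal (((2:ℝ)^(k+1) * M / r)^n) := by
    intro k
    have hδ : (0:ℝ) < (2:ℝ)^(k+1) * M / r := by positivity
    refine le_trans (measure_mono ?_) (cap_bound hdn (-(r⁻¹ • A)) hδ)
    rintro ω ⟨⟨-, hωu⟩, hωS⟩
    refine ⟨hωS, ?_⟩
    rw [Metric.mem_closedBall, dist_eq_norm, sub_neg_eq_add]
    have h1 : ω + r⁻¹ • A = r⁻¹ • (A + r • ω) := by
      rw [smul_add, smul_smul, inv_mul_cancel₀ hr.ne', one_smul, add_comm]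
    rw [h1, norm_smul, Real.norm_eq_abs, _root_.abs_of_pos (inv_pos.mpr hr)]
    rw [div_eq_mul_inv, mul_comm (2^(k+1) * M) r⁻¹, ]
    exact mul_le_mul_of_nonneg_left (le_trans (hgup ω) hωu.le) (inv_pos.mpr hr).le
  -- main splitting
  have hsplit : (∫⁻ ω in Metric.sphere (0:Rd d) 1,
      ENNReal.ofReal (jb ‖A + r • ω‖ ^ (-s)) ∂μH[(n:ℝ)])
      ≤ ∑' k, ENNReal.ofReal (((2:ℝ)^k * M)^(-s)) * μH[(n:ℝ)] (F k) := by
    calc (∫⁻ ω in Metric.sphere (0:Rd d) 1,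
        ENNReal.ofReal (g ω ^ (-s)) ∂μH[(n:ℝ)])
        ≤ ∫⁻ ω in ⋃ k, F k, ENNReal.ofReal (g ω ^ (-s)) ∂μH[(n:ℝ)] :=
          lintegral_mono_set hcover
      _ ≤ ∑' k, ∫⁻ ω in F k, ENNReal.ofReal (g ω ^ (-s)) ∂μH[(n:ℝ)] :=
          lintegral_iUnion_le _ _
      _ ≤ ∑' k, ENNReal.ofReal (((2:ℝ)^k * M)^(-s)) * μH[(n:ℝ)] (F k) :=
          ENNReal.tsum_le_tsum hshell
  refine le_trans hsplit ?_
  rcases le_or_gt r 1 with hr1 | hr1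
  · -- small r : use the total measure bound
    have hterm : ∀ k : ℕ, ENNReal.ofReal (((2:ℝ)^k * M)^(-s)) * μH[(n:ℝ)] (F k)
        ≤ (ENNReal.ofReal ((2:ℝ)^(-s)))^k * (ENNReal.ofReal (M^(-s)) * Ttot d n) := by
      intro k
      have hq : ENNReal.ofReal (((2:ℝ)^k * M)^(-s))
          = (ENNReal.ofReal ((2:ℝ)^(-s)))^k * ENNReal.ofReal (M^(-s)) := by
        rw [Real.mul_rpow (by positivity) hM0.le,
          ← Real.rpow_natCast (2:ℝ) k, ← Real.rpow_mul (by norm_num),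
          mul_comm (k:ℝ) (-s), Real.rpow_mul (by norm_num : (0:ℝ) ≤ 2),
          Real.rpow_natCast, ← ENNReal.ofReal_pow (by positivity),
          ENNReal.ofReal_mul (by positivity)]
      rw [hq, mul_assoc]
      exact mul_le_mul_right (mul_le_mul_right (hμtot k) _) _
    refine le_trans (ENNReal.tsum_le_tsum hterm) ?_
    rw [ENNReal.tsum_mul_right, ENNReal.tsum_geometric]
    -- now a finite computation
    have hZ1fin := Z1_lt_top d n hs0
    have hfold : (1 - ENNReal.ofReal ((2:ℝ)^(-s)))⁻¹ * (ENNReal.ofReal (M^(-s)) * Ttot d n)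
        = Z1 d n s * ENNReal.ofReal (M^(-s)) := by
      rw [Z1]; ring
    rw [hfold]
    have hZr : Z1 d n s * ENNReal.ofReal (M^(-s))
        = ENNReal.ofReal ((Z1 d n s).toReal * M^(-s)) := by
      rw [ENNReal.ofReal_mul ENNReal.toReal_nonneg, ENNReal.ofReal_toReal hZ1fin.ne]
    rw [hZr]
    refine ENNReal.ofReal_le_ofReal ?_
    -- real inequality
    have e1 : M^(-s) ≤ M^((n:ℝ)-s) := by
      refine Real.rpow_le_rpow_of_exponent_le hM1 ?_
      have : (0:ℝ) ≤ (n:ℝ) := Nat.cast_nonneg n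
      linarith
    have hjb2 : jb r ≤ 2 := by
      have h4 : Real.sqrt 4 = 2 := by
        rw [show (4:ℝ) = 2^2 by norm_num, Real.sqrt_sq (by norm_num : (0:ℝ) ≤ 2)]
      rw [jb, ← h4]
      exact Real.sqrt_le_sqrt (by nlinarith)
    have e2 : (2:ℝ)^(-(n:ℝ)) ≤ jb r ^ (-(n:ℝ)) :=
      Real.rpow_le_rpow_of_nonpos (jb_pos r) hjb2 (neg_nonpos.mpr (Nat.cast_nonneg n))
    have e3 : (1:ℝ) ≤ 2^(2*d) * (2:ℝ)^(-(n:ℝ)) := by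
      rw [← Real.rpow_natCast (2:ℝ) (2*d), ← Real.rpow_add (by norm_num)]
      have h4 : (0:ℝ) ≤ ((2*d : ℕ):ℝ) + (-(n:ℝ)) := by
        push_cast [hdn]; ring_nf; nlinarith [Nat.cast_nonneg (α := ℝ) n]
      have := Real.rpow_le_rpow_of_exponent_le (one_le_two (α := ℝ)) h4
      rwa [Real.rpow_zero] at this
    have hC : (Z1 d n s).toReal * 2^(2*d) + 1 ≤ Cval d n s := by
      rw [Cval, ENNReal.toReal_add hZ1fin.ne (Z2_lt_top d n hns).ne]
      have h5 : (0:ℝ) ≤ (Z2 d n s).toReal := ENNReal.toReal_nonneg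
      have h6 : (0:ℝ) < 2^(2*d) := by positivity
      nlinarith
    have hz1 : (0:ℝ) ≤ (Z1 d n s).toReal := ENNReal.toReal_nonneg
    have hMns : (0:ℝ) < M^((n:ℝ)-s) := Real.rpow_pos_of_pos hM0 _
    have hjbrn : (0:ℝ) < jb r ^ (-(n:ℝ)) := Real.rpow_pos_of_pos (jb_pos r) _
    have h2n : (0:ℝ) < (2:ℝ)^(-(n:ℝ)) := Real.rpow_pos_of_pos (by norm_num) _
    have h7 : (0:ℝ) < 2^(2*d) := by positivity
    have hCpos := Cval_pos d n s
    calc (Z1 d n s).toReal * M^(-s)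
        ≤ (Z1 d n s).toReal * M^((n:ℝ)-s) :=
          mul_le_mul_of_nonneg_left e1 hz1
      _ ≤ ((Z1 d n s).toReal * 2^(2*d)) * (M^((n:ℝ)-s) * jb r ^ (-(n:ℝ))) := by
          nlinarith [mul_le_mul_of_nonneg_left e2 hz1, mul_le_mul_of_nonneg_right e3
            (mul_nonneg hz1 hMns.le)]
      _ ≤ Cval d n s * M^((n:ℝ)-s) * jb r ^ (-(n:ℝ)) := by
          rw [mul_assoc (Cval d n s)]
          refine mul_le_mul_of_nonneg_right ?_ (by positivity)
          nlinarith
  · -- large r : use the cap bound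
    have hid : ∀ k : ℕ, ((2:ℝ)^k * M)^(-s) * ((2:ℝ)^(k+1) * M / r)^n
        = ((2:ℝ)^((n:ℝ)-s))^k * ((2:ℝ)^(n:ℕ) * (M^((n:ℝ)-s) * r^(-(n:ℝ)))) := by
      intro k
      have hprk : ((2:ℝ)^k * M)^(-s) = (2:ℝ)^((k:ℝ)*(-s)) * M^(-s) := by
        rw [Real.mul_rpow (by positivity) hM0.le, ← Real.rpow_natCast (2:ℝ) k,
          ← Real.rpow_mul (by norm_num)]
      have hd1 : ((2:ℝ)^(k+1) * M / r)^n
          = (2:ℝ)^(((k:ℝ)+1)*(n:ℝ)) * M^((n:ℝ)) * r^(-(n:ℝ)) := by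
        rw [div_pow, mul_pow, ← pow_mul]
        rw [← Real.rpow_natCast (2:ℝ) ((k+1)*n), ← Real.rpow_natCast M n,
          ← Real.rpow_natCast r n, Real.rpow_neg hr.le, div_eq_mul_inv]
        push_cast
        ring
      calc ((2:ℝ)^k * M)^(-s) * ((2:ℝ)^(k+1) * M / r)^n
          = (2:ℝ)^((k:ℝ)*(-s)) * M^(-s) *
            ((2:ℝ)^(((k:ℝ)+1)*(n:ℝ)) * M^((n:ℝ)) * r^(-(n:ℝ))) := by rw [hprk, hd1]
        _ = (2:ℝ)^((k:ℝ)*(-s) + ((k:ℝ)+1)*(n:ℝ)) * (M^(-s + (n:ℝ)) * r^(-(n:ℝ))) := by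
            rw [Real.rpow_add two_pos, Real.rpow_add hM0]; ring
        _ = (2:ℝ)^(((n:ℝ)-s)*(k:ℝ) + (n:ℝ)) * (M^((n:ℝ)-s) * r^(-(n:ℝ))) := by
            rw [show (k:ℝ)*(-s) + ((k:ℝ)+1)*(n:ℝ) = ((n:ℝ)-s)*(k:ℝ) + (n:ℝ) by ring,
              show -s + (n:ℝ) = (n:ℝ)-s by ring]
        _ = ((2:ℝ)^((n:ℝ)-s))^k * ((2:ℝ)^(n:ℕ) * (M^((n:ℝ)-s) * r^(-(n:ℝ)))) := by
            rw [Real.rpow_add two_pos, Real.rpow_mul (by norm_num : (0:ℝ) ≤ 2),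
              Real.rpow_natCast ((2:ℝ)^((n:ℝ)-s)) k, Real.rpow_natCast (2:ℝ) n,
              mul_assoc]
    have hterm : ∀ k : ℕ, ENNReal.ofReal (((2:ℝ)^k * M)^(-s)) * μH[(n:ℝ)] (F k)
        ≤ (ENNReal.ofReal ((2:ℝ)^((n:ℝ)-s)))^k *
          (Ccap d n * ENNReal.ofReal ((2:ℝ)^(n:ℕ)) *
            ENNReal.ofReal (M^((n:ℝ)-s) * r^(-(n:ℝ)))) := by
      intro k
      calc ENNReal.ofReal (((2:ℝ)^k * M)^(-s)) * μH[(n:ℝ)] (F k)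
          ≤ ENNReal.ofReal (((2:ℝ)^k * M)^(-s)) *
            (Ccap d n * ENNReal.ofReal (((2:ℝ)^(k+1) * M / r)^n)) :=
            mul_le_mul_right (hμcap k) _
        _ = Ccap d n * ENNReal.ofReal (((2:ℝ)^k * M)^(-s) * ((2:ℝ)^(k+1) * M / r)^n) := by
            rw [ENNReal.ofReal_mul (by positivity)]; ring
        _ = (ENNReal.ofReal ((2:ℝ)^((n:ℝ)-s)))^k *
            (Ccap d n * ENNReal.ofReal ((2:ℝ)^(n:ℕ)) *
              ENNReal.ofReal (M^((n:ℝ)-s) * r^(-(n:ℝ)))) := by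
            rw [hid k, ENNReal.ofReal_mul (by positivity),
              ENNReal.ofReal_mul (by positivity),
              ← ENNReal.ofReal_pow (by positivity)]
            ring
    refine le_trans (ENNReal.tsum_le_tsum hterm) ?_
    rw [ENNReal.tsum_mul_right, ENNReal.tsum_geometric]
    have hZ2fin := Z2_lt_top d n hns
    have hfold : (1 - ENNReal.ofReal ((2:ℝ)^((n:ℝ)-s)))⁻¹ *
        (Ccap d n * ENNReal.ofReal ((2:ℝ)^(n:ℕ)) *
          ENNReal.ofReal (M^((n:ℝ)-s) * r^(-(n:ℝ))))
        = Z2 d n s * ENNReal.ofReal (M^((n:ℝ)-s) * r^(-(n:ℝ))) := by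
      rw [Z2]; ring
    rw [hfold]
    have hZr : Z2 d n s * ENNReal.ofReal (M^((n:ℝ)-s) * r^(-(n:ℝ)))
        = ENNReal.ofReal ((Z2 d n s).toReal * (M^((n:ℝ)-s) * r^(-(n:ℝ)))) := by
      rw [ENNReal.ofReal_mul ENNReal.toReal_nonneg, ENNReal.ofReal_toReal hZ2fin.ne]
    rw [hZr]
    refine ENNReal.ofReal_le_ofReal ?_
    -- real inequality for large r
    have hs2 : Real.sqrt 2 ≤ 2 := by
      nlinarith [Real.sq_sqrt (by norm_num : (0:ℝ) ≤ 2), Real.sqrt_nonneg 2]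
    have hjbr : jb r ≤ 2 * r := by
      refine le_trans (jb_le_sqrt2_mul hr1.le) ?_
      nlinarith [Real.sqrt_nonneg 2]
    have ha : ((2:ℝ)*r)^(-(n:ℝ)) ≤ jb r ^ (-(n:ℝ)) :=
      Real.rpow_le_rpow_of_nonpos (jb_pos r) hjbr (neg_nonpos.mpr (Nat.cast_nonneg n))
    have hb : ((2:ℝ)*r)^(-(n:ℝ)) = (2:ℝ)^(-(n:ℝ)) * r^(-(n:ℝ)) :=
      Real.mul_rpow (by norm_num) hr.le
    have e2 : r^(-(n:ℝ)) ≤ (2:ℝ)^((n:ℝ)) * jb r^(-(n:ℝ)) := by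
      have h3 : r^(-(n:ℝ)) = (2:ℝ)^((n:ℝ)) * ((2:ℝ)^(-(n:ℝ)) * r^(-(n:ℝ))) := by
        rw [← mul_assoc, ← Real.rpow_add two_pos]
        simp
      rw [h3, ← hb]
      exact mul_le_mul_of_nonneg_left ha (by positivity)
    have hCge : (Z2 d n s).toReal * (2:ℝ)^((n:ℝ)) ≤ Cval d n s := by
      have h4 : ((2:ℝ))^((n:ℝ)) = (2:ℝ)^(n:ℕ) := Real.rpow_natCast 2 n
      have h5 : ((2:ℝ))^(n:ℕ) ≤ (2:ℝ)^(2*d) :=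
        pow_le_pow_right₀ one_le_two (by omega)
      have h6 := Z1_lt_top d n hs0
      rw [Cval, ENNReal.toReal_add h6.ne hZ2fin.ne, h4]
      have h7 : (0:ℝ) ≤ (Z1 d n s).toReal := ENNReal.toReal_nonneg
      have h8 : (0:ℝ) ≤ (Z2 d n s).toReal := ENNReal.toReal_nonneg
      have h9 : (0:ℝ) < (2:ℝ)^(n:ℕ) := by positivity
      nlinarith
    have hMns : (0:ℝ) < M^((n:ℝ)-s) := Real.rpow_pos_of_pos hM0 _
    have hjbrn : (0:ℝ) < jb r ^ (-(n:ℝ)) := Real.rpow_pos_of_pos (jb_pos r) _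
    have h8 : (0:ℝ) ≤ (Z2 d n s).toReal := ENNReal.toReal_nonneg
    have h2n : (0:ℝ) < (2:ℝ)^((n:ℝ)) := Real.rpow_pos_of_pos (by norm_num) _
    calc (Z2 d n s).toReal * (M^((n:ℝ)-s) * r^(-(n:ℝ)))
        ≤ (Z2 d n s).toReal * (M^((n:ℝ)-s) * ((2:ℝ)^((n:ℝ)) * jb r^(-(n:ℝ)))) := by
          refine mul_le_mul_of_nonneg_left ?_ h8
          exact mul_le_mul_of_nonneg_left e2 hMns.le
      _ = ((Z2 d n s).toReal * (2:ℝ)^((n:ℝ))) * M^((n:ℝ)-s) * jb r^(-(n:ℝ)) := by ring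
      _ ≤ Cval d n s * M^((n:ℝ)-s) * jb r^(-(n:ℝ)) := by
          refine mul_le_mul_of_nonneg_right ?_ hjbrn.le
          exact mul_le_mul_of_nonneg_right hCge hMns.le

/-- sphere integral estimate
∫_{S^{d-1}} ⟨A + rω⟩^{-s} dω ≲ ⟨|A| − r⟩^{d−1−s} ⟨r⟩^{1−d}, constant depending only on d, s. -/
theorem stmt_0 (d : ℕ) (hd : 2 ≤ d) (s : ℝ) (hs : (d : ℝ) - 1 < s) :
    ∃ C > 0, ∀ (A : Rd d) (r : ℝ), 0 < r →
      (∫ ω in Metric.sphere (0 : Rd d) 1, jb ‖A + r • ω‖ ^ (-s) ∂μH[(d : ℝ) - 1])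
        ≤ C * jb (‖A‖ - r) ^ ((d : ℝ) - 1 - s) * jb r ^ (1 - (d : ℝ)) := by
  set n := d - 1 with hn
  have hdn : d = n + 1 := by omega
  have hcast : ((d:ℝ) - 1) = ((n:ℕ):ℝ) := by rw [hdn]; push_cast; ring
  have hns : (n:ℝ) < s := by rw [← hcast]; exact hs
  have hs0 : 0 < s := by
    have : (1:ℝ) ≤ (d:ℝ) - 1 := by
      have : (2:ℝ) ≤ (d:ℝ) := by exact_mod_cast hd
      linarith
    linarith
  refine ⟨Cval d n s, Cval_pos d n s, ?_⟩
  intro A r hr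
  rw [hcast, show (1 - (d:ℝ)) = -((n:ℕ):ℝ) by rw [hdn]; push_cast; ring]
  have hpt : 0 ≤ᵐ[μH[((n:ℕ):ℝ)].restrict (Metric.sphere (0:Rd d) 1)]
      fun ω => jb ‖A + r • ω‖ ^ (-s) :=
    Filter.Eventually.of_forall fun ω => Real.rpow_nonneg (jb_nonneg _) _
  have hmeas : AEStronglyMeasurable (fun ω : Rd d => jb ‖A + r • ω‖ ^ (-s))
      (μH[((n:ℕ):ℝ)].restrict (Metric.sphere (0:Rd d) 1)) := by
    have hgc : Continuous fun ω : Rd d => jb ‖A + r • ω‖ := by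
      have h1 : Continuous fun ω : Rd d => 1 + ‖A + r • ω‖^2 :=
        continuous_const.add (((continuous_const.add (continuous_id.const_smul r)).norm).pow 2)
      exact Real.continuous_sqrt.comp h1
    exact (hgc.rpow_const fun ω => Or.inl (jb_pos _).ne').aestronglyMeasurable
  rw [MeasureTheory.integral_eq_lintegral_of_nonneg_ae hpt hmeas]
  have hkey := main_bound hdn hns hs0 A hr
  have hRHS : 0 ≤ Cval d n s * jb (‖A‖ - r) ^ ((n:ℝ) - s) * jb r ^ (-(n:ℝ)) := by
    exact mul_nonneg (mul_nonneg (Cval_pos d n s).le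
      (Real.rpow_nonneg (jb_nonneg _) _)) (Real.rpow_nonneg (jb_nonneg _) _)
  calc (∫⁻ ω in Metric.sphere (0:Rd d) 1,
        ENNReal.ofReal (jb ‖A + r • ω‖ ^ (-s)) ∂μH[((n:ℕ):ℝ)]).toReal
      ≤ (ENNReal.ofReal (Cval d n s * jb (‖A‖ - r) ^ ((n:ℝ) - s)
          * jb r ^ (-(n:ℝ)))).toReal :=
        ENNReal.toReal_mono ENNReal.ofReal_ne_top hkey
    _ = Cval d n s * jb (‖A‖ - r) ^ ((n:ℝ) - s) * jb r ^ (-(n:ℝ)) :=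
        ENNReal.toReal_ofReal hRHS
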